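/- Let p, q be coprime positive integers and k ∈ {0,...,p-1} with gcd(p, k) = 1. Let E = F[[U]]^p with basis e_0,...,e_{p-1}, made into an F[[W,Z]]-module (where U = WZ) by letting W act by W·e_i = U·e_{i+q} if (i + q) mod p ∈ {0,...,k-1} and W·e_i = e_{i+q} otherwise (indices mod p), and Z act as U·W^{-1}. Then there exists an F[[W,Z]]-submodule R of F[[U^{1/p}]] (where W acts as U^{k/p} and Z as U^{1-k/p}) that is isomorphic to E as an F[[W,Z]]-module; concretely E is isomorphic to the free F[[U]]-submodule of F[[U^{1/p}]] spanned by U^{m'_0},...,U^{m'_{p-1}}, where m'_i = m_i - min_j m_j and the m_i are defined recursively as in the monodromy grading data. -/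

import Mathlib

namespace Stmt11Aux

def M (p q k : ℕ) : ℕ → ℤ
  | 0 => 0
  | t+1 => M p q k t + k - (if (((t+1) * q : ℕ) : ZMod p).val < k then (p:ℤ) else 0)

noncomputable def B (p q k : ℕ) : ℤ :=
  (insert 0 ((Finset.range p).image (M p q k))).min' (Finset.insert_nonempty _ _)

noncomputable def mz (p q k : ℕ) (i : ZMod p) : ℕ :=
  (M p q k ((i * (q : ZMod p)⁻¹).val) - B p q k).toNat

noncomputable def idx (p q k : ℕ) (n : ℕ) : ZMod p :=
  ((n : ZMod p) + ((B p q k : ℤ) : ZMod p)) * (k : ZMod p)⁻¹ * (q : ZMod p)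

variable {p q k : ℕ}

lemma B_le {t : ℕ} (ht : t < p) : B p q k ≤ M p q k t :=
  Finset.min'_le _ _ (Finset.mem_insert_of_mem (Finset.mem_image_of_mem _ (Finset.mem_range.2 ht)))

lemma B_le0 : B p q k ≤ 0 := Finset.min'_le _ _ (Finset.mem_insert_self _ _)

lemma M_cast (t : ℕ) : ((M p q k t : ℤ) : ZMod p) = (t : ZMod p) * k := by
  induction t with
  | zero => simp [M]
  | succ t ih =>
    rw [M]
    push_cast
    rw [ih]
    split_ifs <;> simp [ZMod.natCast_self] <;> ring

lemma hqu (hpq : Nat.Coprime p q) : IsUnit (q : ZMod p) :=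
  (ZMod.isUnit_iff_coprime q p).2 hpq.symm

lemma hku (hpk : Nat.Coprime p k) : IsUnit (k : ZMod p) :=
  (ZMod.isUnit_iff_coprime k p).2 hpk.symm

lemma mz_cast [NeZero p] (i : ZMod p) :
    ((mz p q k i : ℕ) : ZMod p) = i * (q : ZMod p)⁻¹ * k - ((B p q k : ℤ) : ZMod p) := by
  have h := Int.toNat_of_nonneg (sub_nonneg.2 (B_le (q := q) (k := k) (ZMod.val_lt (i * (q : ZMod p)⁻¹))))
  have : (((M p q k ((i * (q : ZMod p)⁻¹).val) - B p q k).toNat : ℤ) : ZMod p)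
      = i * (q : ZMod p)⁻¹ * k - ((B p q k : ℤ) : ZMod p) := by
    rw [h]
    push_cast
    rw [M_cast, ZMod.natCast_zmod_val]
  rw [mz, ← this]
  push_cast
  ring

lemma idx_congr {n n' : ℕ} (h : (n : ZMod p) = (n' : ZMod p)) : idx p q k n = idx p q k n' := by
  unfold idx; rw [h]

lemma idx_mz [NeZero p] (hpq : Nat.Coprime p q) (hpk : Nat.Coprime p k) (i : ZMod p) :
    idx p q k (mz p q k i) = i := by
  have hq1 : (q : ZMod p) * (q : ZMod p)⁻¹ = 1 := ZMod.mul_inv_of_unit _ (hqu hpq)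
  have hk1 : (k : ZMod p) * (k : ZMod p)⁻¹ = 1 := ZMod.mul_inv_of_unit _ (hku hpk)
  rw [idx, mz_cast]
  linear_combination (i * (q:ZMod p)⁻¹ * (q:ZMod p)) * hk1 + i * hq1

lemma idx_eq_of [NeZero p] (hpq : Nat.Coprime p q) (hpk : Nat.Coprime p k) {n : ℕ} {i : ZMod p}
    (h : ((mz p q k i : ℕ) : ZMod p) = (n : ZMod p)) : idx p q k n = i := by
  rw [← idx_congr h, idx_mz hpq hpk]

lemma mz_idx_cast [NeZero p] (hpq : Nat.Coprime p q) (hpk : Nat.Coprime p k) (n : ℕ) :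
    ((mz p q k (idx p q k n) : ℕ) : ZMod p) = (n : ZMod p) := by
  have hq1 : (q : ZMod p) * (q : ZMod p)⁻¹ = 1 := ZMod.mul_inv_of_unit _ (hqu hpq)
  have hk1 : (k : ZMod p) * (k : ZMod p)⁻¹ = 1 := ZMod.mul_inv_of_unit _ (hku hpk)
  rw [mz_cast, idx]
  linear_combination (((n:ZMod p) + ((B p q k : ℤ) : ZMod p)) * (k:ZMod p)⁻¹ * (k:ZMod p)) * hq1
    + ((n:ZMod p) + ((B p q k : ℤ) : ZMod p)) * hk1


lemma mz_inj [NeZero p] (hpq : Nat.Coprime p q) (hpk : Nat.Coprime p k) {i j : ZMod p}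
    (h : mz p q k i % p = mz p q k j % p) : i = j := by
  have hc : ((mz p q k i : ℕ) : ZMod p) = ((mz p q k j : ℕ) : ZMod p) :=
    (ZMod.natCast_eq_natCast_iff' _ _ _).2 h
  have h1 : idx p q k (mz p q k j) = i := idx_eq_of hpq hpk hc
  have h2 : idx p q k (mz p q k j) = j := idx_mz hpq hpk j
  exact h1.symm.trans h2


lemma count_lemma [NeZero p] (hpq : Nat.Coprime p q) (hk : k < p) :
    ((Finset.range p).filter (fun s => (((s+1) * q : ℕ) : ZMod p).val < k)).card = k := by
  have hq1 : (q : ZMod p) * (q : ZMod p)⁻¹ = 1 := ZMod.mul_inv_of_unit _ (hqu hpq)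
  have step1 : ((Finset.range p).filter (fun s => (((s+1) * q : ℕ) : ZMod p).val < k)).card
      = (Finset.univ.filter (fun x : ZMod p => x.val < k)).card := by
    apply Finset.card_bij' (fun s _ => (((s+1) * q : ℕ) : ZMod p))
      (fun x _ => ((x * (q : ZMod p)⁻¹ - 1 : ZMod p)).val)
    · intro s hs
      simp only [Finset.mem_filter, Finset.mem_univ, true_and]
      exact (Finset.mem_filter.1 hs).2
    · intro x hx
      simp only [Finset.mem_filter, Finset.mem_range]
      constructor
      · exact ZMod.val_lt _
      · have : ((((x * (q : ZMod p)⁻¹ - 1).val + 1) * q : ℕ) : ZMod p) = x := by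
          push_cast
          rw [ZMod.natCast_zmod_val]
          linear_combination x * hq1
        rw [this]
        exact (Finset.mem_filter.1 hx).2
    · intro s hs
      have hs' : s < p := Finset.mem_range.1 (Finset.mem_filter.1 hs).1
      have : ((((s+1) * q : ℕ) : ZMod p) * (q : ZMod p)⁻¹ - 1) = (s : ZMod p) := by
        push_cast
        linear_combination ((s : ZMod p) + 1) * hq1
      rw [this, ZMod.val_cast_of_lt hs']
    · intro x hx
      have : ((((x * (q : ZMod p)⁻¹ - 1).val + 1) * q : ℕ) : ZMod p) = x := by
        push_cast
        rw [ZMod.natCast_zmod_val]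
        linear_combination x * hq1
      rw [this]
  have step2 : (Finset.univ.filter (fun x : ZMod p => x.val < k)).card = (Finset.range k).card := by
    apply Finset.card_bij' (fun (x : ZMod p) _ => x.val) (fun n _ => (n : ZMod p))
    · intro x hx
      exact Finset.mem_range.2 (Finset.mem_filter.1 hx).2
    · intro n hn
      have hn' : n < k := Finset.mem_range.1 hn
      simp only [Finset.mem_filter, Finset.mem_univ, true_and]
      rw [ZMod.val_cast_of_lt (lt_trans hn' hk)]
      exact hn'
    · intro x _
      exact ZMod.natCast_zmod_val x
    · intro n hn
      exact ZMod.val_cast_of_lt (lt_trans (Finset.mem_range.1 hn) hk)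
  rw [step1, step2, Finset.card_range]

lemma M_closed (t : ℕ) : M p q k t =
    (t : ℤ) * k - p * ((Finset.range t).filter
      (fun s => (((s+1) * q : ℕ) : ZMod p).val < k)).card := by
  induction t with
  | zero => simp [M]
  | succ t ih =>
    rw [M, ih, Finset.range_add_one, Finset.filter_insert]
    split_ifs with h
    · rw [Finset.card_insert_of_notMem (by simp)]
      push_cast
      ring
    · push_cast
      ring

lemma M_p [NeZero p] (hpq : Nat.Coprime p q) (hk : k < p) : M p q k p = 0 := by
  rw [M_closed, count_lemma hpq hk]
  ring

lemma key [NeZero p] (hp : 0 < p) (hpq : Nat.Coprime p q) (hk : k < p) (i : ZMod p) :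
    mz p q k (i + q) + (if (i + (q : ZMod p)).val < k then p else 0) = mz p q k i + k := by
  have hq1 : (q : ZMod p) * (q : ZMod p)⁻¹ = 1 := ZMod.mul_inv_of_unit _ (hqu hpq)
  rcases eq_or_lt_of_le (Nat.one_le_iff_ne_zero.2 hp.ne') with hp1 | hp1
  · -- p = 1
    have hk0 : k = 0 := by omega
    have : (i + (q : ZMod p)) = i := by
      have : p = 1 := hp1.symm
      subst this
      exact Subsingleton.elim _ _
    rw [this, hk0]
    simp
  · haveI : Fact (1 < p) := ⟨hp1⟩
    set t := (i * (q : ZMod p)⁻¹).val with ht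
    have htlt : t < p := ZMod.val_lt _
    have h1 : ((i + q) * (q : ZMod p)⁻¹) = (i * (q : ZMod p)⁻¹) + 1 := by
      linear_combination hq1
    have hval : ((i + q) * (q : ZMod p)⁻¹).val = (t + 1) % p := by
      rw [h1, ZMod.val_add, ZMod.val_one, ← ht]
    have htc : ((t : ℕ) : ZMod p) = i * (q : ZMod p)⁻¹ := by
      rw [ht]; exact ZMod.natCast_zmod_val _
    have hcond : (((t+1) * q : ℕ) : ZMod p) = i + q := by
      push_cast
      rw [htc]
      linear_combination i * hq1
    have hMstep : M p q k (t+1) = M p q k t + k - (if (i + (q:ZMod p)).val < k then (p:ℤ) else 0) := by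
      rw [M, hcond]
    have hB0 := B_le0 (p := p) (q := q) (k := k)
    have hBt := B_le (q := q) (k := k) htlt
    rcases Nat.lt_or_ge (t+1) p with h2 | h2
    · have hBt1 := B_le (q := q) (k := k) h2
      have hval' : ((i + q) * (q : ZMod p)⁻¹).val = t + 1 := by
        rw [hval, Nat.mod_eq_of_lt h2]
      rw [mz, mz, hval', ← ht]
      split_ifs at hMstep ⊢ with hc <;> omega
    · have h2' : t + 1 = p := by omega
      have hval' : ((i + q) * (q : ZMod p)⁻¹).val = 0 := by
        rw [hval, h2', Nat.mod_self]
      have hMp : M p q k (t+1) = 0 := by rw [h2']; exact M_p hpq hk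
      rw [mz, mz, hval', ← ht]
      have hM0 : M p q k 0 = 0 := rfl
      split_ifs at hMstep ⊢ with hc <;> omega


open PowerSeries

noncomputable def fmap (p q k : ℕ) :
    (ZMod p → PowerSeries (ZMod 2)) →ₗ[ZMod 2] PowerSeries (ZMod 2) where
  toFun x := PowerSeries.mk fun n =>
    if mz p q k (idx p q k n) ≤ n then
      PowerSeries.coeff ((n - mz p q k (idx p q k n))/p) (x (idx p q k n)) else 0
  map_add' x y := by
    ext n
    simp only [coeff_mk, map_add, Pi.add_apply]
    split_ifs <;> simp
  map_smul' c x := by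
    ext n
    simp only [coeff_mk, Pi.smul_apply, map_smul, RingHom.id_apply, smul_eq_mul,
      PowerSeries.coeff_smul]
    split_ifs <;> simp

noncomputable def gmap (p q k : ℕ) :
    PowerSeries (ZMod 2) →ₗ[ZMod 2] (ZMod p → PowerSeries (ZMod 2)) where
  toFun s := fun i => PowerSeries.mk fun n' => PowerSeries.coeff (mz p q k i + p * n') s
  map_add' a b := by funext i; ext n'; simp
  map_smul' c a := by funext i; ext n'; simp

def RS (p q k : ℕ) : Submodule (ZMod 2) (PowerSeries (ZMod 2)) where
  carrier := {s | ∀ n : ℕ, PowerSeries.coeff n s ≠ 0 →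
    ∃ i : ZMod p, mz p q k i ≤ n ∧ n % p = mz p q k i % p}
  zero_mem' := by intro n hn; simp at hn
  add_mem' := by
    intro a b ha hb n hn
    rw [map_add] at hn
    by_cases h : PowerSeries.coeff n a = 0
    · exact hb n (by intro h'; apply hn; rw [h, h', add_zero])
    · exact ha n h
  smul_mem' := by
    intro c s hs n hn
    apply hs n
    intro h
    apply hn
    rw [PowerSeries.coeff_smul, h, smul_zero]

variable {p q k : ℕ}

lemma coeff_fmap (x : ZMod p → PowerSeries (ZMod 2)) (n : ℕ) :
    PowerSeries.coeff n (fmap p q k x) =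
      if mz p q k (idx p q k n) ≤ n then
        PowerSeries.coeff ((n - mz p q k (idx p q k n))/p) (x (idx p q k n)) else 0 := by
  simp only [fmap, LinearMap.coe_mk, AddHom.coe_mk, PowerSeries.coeff_mk]

lemma gmap_apply (s : PowerSeries (ZMod 2)) (i : ZMod p) :
    gmap p q k s i = PowerSeries.mk fun n' => PowerSeries.coeff (mz p q k i + p * n') s :=
  rfl

lemma dvd_sub' [NeZero p] (hpq : Nat.Coprime p q) (hpk : Nat.Coprime p k) (n : ℕ)
    (h : mz p q k (idx p q k n) ≤ n) : p ∣ n - mz p q k (idx p q k n) := by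
  have h1 := mz_idx_cast hpq hpk n
  have h2 : ((n - mz p q k (idx p q k n) : ℕ) : ZMod p) = 0 := by
    rw [Nat.cast_sub h, h1, sub_self]
  exact (ZMod.natCast_eq_zero_iff _ _).1 h2

lemma idx_pmul [NeZero p] (hpq : Nat.Coprime p q) (hpk : Nat.Coprime p k) (i : ZMod p) (n' : ℕ) :
    idx p q k (mz p q k i + p * n') = i :=
  idx_eq_of hpq hpk (by push_cast [ZMod.natCast_self]; ring)

lemma coeff_fmap_at [NeZero p] (hp : 0 < p) (hpq : Nat.Coprime p q) (hpk : Nat.Coprime p k)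
    (x : ZMod p → PowerSeries (ZMod 2)) (i : ZMod p) (n' : ℕ) :
    PowerSeries.coeff (mz p q k i + p * n') (fmap p q k x)
      = PowerSeries.coeff n' (x i) := by
  rw [coeff_fmap, idx_pmul hpq hpk, if_pos (Nat.le_add_right _ _), Nat.add_sub_cancel_left,
    Nat.mul_div_cancel_left _ hp]

lemma fmap_mem [NeZero p] (hpq : Nat.Coprime p q) (hpk : Nat.Coprime p k)
    (x : ZMod p → PowerSeries (ZMod 2)) : fmap p q k x ∈ RS p q k := by
  intro n hn
  rw [coeff_fmap] at hn
  by_cases h : mz p q k (idx p q k n) ≤ n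
  · exact ⟨idx p q k n, h,
      (ZMod.natCast_eq_natCast_iff' _ _ _).1 (mz_idx_cast hpq hpk n).symm⟩
  · simp [h] at hn

lemma RS_bound [NeZero p] (hpq : Nat.Coprime p q) (hpk : Nat.Coprime p k)
    {s : PowerSeries (ZMod 2)} (hs : s ∈ RS p q k) {n : ℕ}
    (hn : PowerSeries.coeff n s ≠ 0) : mz p q k (idx p q k n) ≤ n := by
  obtain ⟨i, h1, h2⟩ := hs n hn
  have : idx p q k n = i :=
    idx_eq_of hpq hpk ((ZMod.natCast_eq_natCast_iff' _ _ _).2 h2.symm)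
  rw [this]; exact h1

lemma gmap_fmap [NeZero p] (hp : 0 < p) (hpq : Nat.Coprime p q) (hpk : Nat.Coprime p k)
    (x : ZMod p → PowerSeries (ZMod 2)) : gmap p q k (fmap p q k x) = x := by
  funext i
  ext n'
  rw [gmap_apply, PowerSeries.coeff_mk, coeff_fmap_at hp hpq hpk]

lemma fmap_gmap [NeZero p] (hp : 0 < p) (hpq : Nat.Coprime p q) (hpk : Nat.Coprime p k)
    {s : PowerSeries (ZMod 2)} (hs : s ∈ RS p q k) : fmap p q k (gmap p q k s) = s := by
  ext n
  rw [coeff_fmap]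
  by_cases h : mz p q k (idx p q k n) ≤ n
  · rw [if_pos h]
    rw [gmap_apply, PowerSeries.coeff_mk]
    congr 1
    obtain ⟨N, hN⟩ := dvd_sub' hpq hpk n h
    rw [hN, Nat.mul_div_cancel_left _ hp, ← hN, Nat.add_sub_cancel' h]
  · rw [if_neg h]
    by_contra hne
    exact h (RS_bound hpq hpk hs fun h' => hne h'.symm)


lemma fmap_phi [NeZero p] (hp : 0 < p) (hpq : Nat.Coprime p q) (hk : k < p)
    (hpk : Nat.Coprime p k) (x : ZMod p → PowerSeries (ZMod 2)) :
    fmap p q k (fun j => (if j.val < k then (PowerSeries.X : PowerSeries (ZMod 2)) else 1)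
        * x (j - q))
      = PowerSeries.X ^ k * fmap p q k x := by
  have hq1 : (q : ZMod p) * (q : ZMod p)⁻¹ = 1 := ZMod.mul_inv_of_unit _ (hqu hpq)
  ext n
  rw [PowerSeries.coeff_X_pow_mul', coeff_fmap]
  beta_reduce
  set i := idx p q k n with hi
  set m := mz p q k i with hm
  set m2 := mz p q k (i - q) with hm2
  have hA : m + (if i.val < k then p else 0) = m2 + k := by
    have h := key hp hpq hk (i - q)
    rwa [sub_add_cancel] at h
  have hmc : ((m : ℕ) : ZMod p) = (n : ZMod p) := mz_idx_cast hpq hpk n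
  by_cases hkn : k ≤ n
  · rw [if_pos hkn]
    have hidx2 : idx p q k (n - k) = i - q := by
      apply idx_eq_of hpq hpk
      rw [Nat.cast_sub hkn, ← hmc, hm, mz_cast, mz_cast]
      linear_combination (-(k : ZMod p)) * hq1
    rw [coeff_fmap, hidx2, ← hm2]
    by_cases hc : i.val < k
    · simp only [if_pos hc] at hA ⊢
      rw [← pow_one (PowerSeries.X : PowerSeries (ZMod 2)), PowerSeries.coeff_X_pow_mul']
      by_cases h1 : m ≤ n
      · obtain ⟨N, hN⟩ := dvd_sub' hpq hpk n h1
        rw [← hi, ← hm] at hN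
        have hdiv : (n - m)/p = N := by rw [hN, Nat.mul_div_cancel_left _ hp]
        rw [if_pos h1, hdiv]
        by_cases h2 : 1 ≤ N
        · have hpN : p ≤ p * N := Nat.le_mul_of_pos_right p h2
          have h3 : m2 ≤ n - k := by omega
          rw [if_pos h2, if_pos h3]
          congr 1
          have hNN : N - 1 + 1 = N := Nat.succ_pred_eq_of_pos h2
          have h5 : p * N = p * (N - 1) + p := by
            conv_lhs => rw [← hNN]
            ring
          have h4 : n - k - m2 = p * (N - 1) := by omega
          rw [h4, Nat.mul_div_cancel_left _ hp]
        · have hN0 : N = 0 := by omega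
          have hN' : n - m = 0 := by rw [hN, hN0, Nat.mul_zero]
          rw [if_neg h2, if_neg]
          intro h3
          omega
      · rw [if_neg h1, if_neg]
        intro h3
        exact h1 (by omega)
    · simp only [if_neg hc] at hA ⊢
      rw [one_mul]
      by_cases h1 : m ≤ n
      · have h3 : m2 ≤ n - k := by omega
        rw [if_pos h1, if_pos h3]
        have h4 : n - k - m2 = n - m := by omega
        rw [h4]
      · rw [if_neg h1, if_neg]
        intro h3
        exact h1 (by omega)
  · rw [if_neg hkn]
    by_cases h1 : m ≤ n
    · rw [if_pos h1]
      by_cases hc : i.val < k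
      · simp only [if_pos hc] at hA ⊢
        rw [← pow_one (PowerSeries.X : PowerSeries (ZMod 2)), PowerSeries.coeff_X_pow_mul',
          if_neg]
        have hd0 : (n - m)/p = 0 := Nat.div_eq_of_lt (by omega)
        omega
      · simp only [if_neg hc] at hA ⊢
        exact absurd (show k ≤ n by omega) hkn
    · rw [if_neg h1]

lemma fmap_psi [NeZero p] (hp : 0 < p) (hpq : Nat.Coprime p q) (hk : k < p)
    (hpk : Nat.Coprime p k) (x : ZMod p → PowerSeries (ZMod 2)) :
    fmap p q k (fun j => (if (j + q : ZMod p).val < k then 1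
        else (PowerSeries.X : PowerSeries (ZMod 2))) * x (j + q))
      = PowerSeries.X ^ (p - k) * fmap p q k x := by
  have hq1 : (q : ZMod p) * (q : ZMod p)⁻¹ = 1 := ZMod.mul_inv_of_unit _ (hqu hpq)
  ext n
  rw [PowerSeries.coeff_X_pow_mul', coeff_fmap]
  beta_reduce
  set i := idx p q k n with hi
  set m := mz p q k i with hm
  set m2 := mz p q k (i + q) with hm2
  have hA : m2 + (if (i + (q : ZMod p)).val < k then p else 0) = m + k := key hp hpq hk i
  have hmc : ((m : ℕ) : ZMod p) = (n : ZMod p) := mz_idx_cast hpq hpk n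
  have hpkcast : ((p - k : ℕ) : ZMod p) = -(k : ZMod p) := by
    rw [Nat.cast_sub hk.le, ZMod.natCast_self]
    ring
  by_cases hkn : p - k ≤ n
  · rw [if_pos hkn]
    have hidx2 : idx p q k (n - (p - k)) = i + q := by
      apply idx_eq_of hpq hpk
      rw [Nat.cast_sub hkn, hpkcast, ← hmc, hm, mz_cast, mz_cast]
      linear_combination (k : ZMod p) * hq1
    rw [coeff_fmap, hidx2, ← hm2]
    by_cases hc : (i + (q : ZMod p)).val < k
    · simp only [if_pos hc] at hA ⊢
      rw [one_mul]
      by_cases h1 : m ≤ n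
      · have h3 : m2 ≤ n - (p - k) := by omega
        rw [if_pos h1, if_pos h3]
        have h4 : n - (p - k) - m2 = n - m := by omega
        rw [h4]
      · rw [if_neg h1, if_neg]
        intro h3
        exact h1 (by omega)
    · simp only [if_neg hc] at hA ⊢
      rw [← pow_one (PowerSeries.X : PowerSeries (ZMod 2)), PowerSeries.coeff_X_pow_mul']
      by_cases h1 : m ≤ n
      · obtain ⟨N, hN⟩ := dvd_sub' hpq hpk n h1
        rw [← hi, ← hm] at hN
        have hdiv : (n - m)/p = N := by rw [hN, Nat.mul_div_cancel_left _ hp]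
        rw [if_pos h1, hdiv]
        by_cases h2 : 1 ≤ N
        · have hpN : p ≤ p * N := Nat.le_mul_of_pos_right p h2
          have h3 : m2 ≤ n - (p - k) := by omega
          rw [if_pos h2, if_pos h3]
          congr 1
          have hNN : N - 1 + 1 = N := Nat.succ_pred_eq_of_pos h2
          have h5 : p * N = p * (N - 1) + p := by
            conv_lhs => rw [← hNN]
            ring
          have h4 : n - (p - k) - m2 = p * (N - 1) := by omega
          rw [h4, Nat.mul_div_cancel_left _ hp]
        · have hN0 : N = 0 := by omega
          have hN' : n - m = 0 := by rw [hN, hN0, Nat.mul_zero]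
          rw [if_neg h2, if_neg]
          intro h3
          omega
      · rw [if_neg h1, if_neg]
        intro h3
        exact h1 (by omega)
  · rw [if_neg hkn]
    by_cases h1 : m ≤ n
    · rw [if_pos h1]
      by_cases hc : (i + (q : ZMod p)).val < k
      · simp only [if_pos hc] at hA ⊢
        exact absurd (show p - k ≤ n by omega) hkn
      · simp only [if_neg hc] at hA ⊢
        rw [← pow_one (PowerSeries.X : PowerSeries (ZMod 2)), PowerSeries.coeff_X_pow_mul',
          if_neg]
        have hd0 : (n - m)/p = 0 := Nat.div_eq_of_lt (by omega)
        omega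
    · rw [if_neg h1]

end Stmt11Aux


open Stmt11Aux

/-- Interpretation of the local system `E_{p,q,k}` inside `F⟦U^{1/p}⟧` when
`gcd(p,k) = 1`.  Here `F = ℤ/2ℤ`, and `F⟦U^{1/p}⟧` is modeled as the power series
ring `F⟦T⟧` with `T = U^{1/p}`, so that `U = T^p`, `W` acts as `T^k` and `Z` as
`T^{p-k}`.  The module `E = E_{p,q,k} = ⊕_{i ∈ ℤ/pℤ} e_i F⟦U⟧` carries the `W`-action
`φ(e_i) = U·e_{i+q}` if `(i+q) mod p ∈ {0,…,k-1}`, `e_{i+q}` otherwise, and the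
`Z`-action `ψ = U·φ⁻¹`.  The claim: there is an `F⟦W,Z⟧`-submodule `R ⊆ F⟦T⟧`
(i.e. a subspace closed under multiplication by `T^k` and `T^{p-k}`) together with an
isomorphism `f : E ≃ R` intertwining `φ` with `T^k`, `ψ` with `T^{p-k}` (and hence
`U` with `T^p`); concretely, `R` is the free `F⟦U⟧`-submodule spanned by monomials
`T^{m'_i}`, `i ∈ ℤ/pℤ`. -/
theorem stmt11 (p q k : ℕ) (hp : 0 < p) (hq : 0 < q) (hpq : Nat.Coprime p q)
    (hk : k < p) (hpk : Nat.Coprime p k)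
    (φ ψ : (ZMod p → PowerSeries (ZMod 2)) →ₗ[PowerSeries (ZMod 2)]
      (ZMod p → PowerSeries (ZMod 2)))
    (hφ : ∀ x j, φ x j = (if (j : ZMod p).val < k then PowerSeries.X else 1) * x (j - q))
    (hψ : ∀ x j, ψ x j =
      (if ((j + q : ZMod p)).val < k then 1 else PowerSeries.X) * x (j + q)) :
    ∃ Rsub : Submodule (ZMod 2) (PowerSeries (ZMod 2)),
      (∀ s ∈ Rsub, PowerSeries.X ^ k * s ∈ Rsub) ∧
      (∀ s ∈ Rsub, PowerSeries.X ^ (p - k) * s ∈ Rsub) ∧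
      ∃ f : (ZMod p → PowerSeries (ZMod 2)) ≃ₗ[ZMod 2] Rsub,
        (∀ x, ((f (φ x) : PowerSeries (ZMod 2)))
            = PowerSeries.X ^ k * ((f x : PowerSeries (ZMod 2)))) ∧
        (∀ x, ((f (ψ x) : PowerSeries (ZMod 2)))
            = PowerSeries.X ^ (p - k) * ((f x : PowerSeries (ZMod 2)))) ∧
        (∀ x, ((f ((PowerSeries.X : PowerSeries (ZMod 2)) • x) : PowerSeries (ZMod 2)))
            = PowerSeries.X ^ p * ((f x : PowerSeries (ZMod 2)))) ∧
      ∃ m' : ZMod p → ℕ,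
        (Rsub : Set (PowerSeries (ZMod 2))) =
          {s | ∀ n : ℕ, PowerSeries.coeff n s ≠ 0 →
            ∃ i : ZMod p, m' i ≤ n ∧ n % p = m' i % p} := by
  haveI : NeZero p := ⟨hp.ne'⟩
  refine ⟨RS p q k, ?_, ?_, ?_⟩
  · -- closed under X^k
    intro s hs n hn
    rw [PowerSeries.coeff_X_pow_mul'] at hn
    by_cases hkn : k ≤ n
    · rw [if_pos hkn] at hn
      obtain ⟨i, h1, h2⟩ := hs (n - k) hn
      have hA := key hp hpq hk i
      have hle : mz p q k (i + q) ≤ mz p q k i + k := by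
        split_ifs at hA <;> omega
      refine ⟨i + q, by omega, ?_⟩
      apply (ZMod.natCast_eq_natCast_iff' _ _ _).1
      have hc2 : ((mz p q k (i + q) : ℕ) : ZMod p) = ((mz p q k i : ℕ) : ZMod p) + k := by
        have h := congrArg (Nat.cast : ℕ → ZMod p) hA
        push_cast at h
        split_ifs at h with hcc
        · rw [ZMod.natCast_self] at h
          linear_combination h
        · linear_combination h
      have hc1 : ((mz p q k i : ℕ) : ZMod p) = ((n - k : ℕ) : ZMod p) :=
        (ZMod.natCast_eq_natCast_iff' _ _ _).2 h2.symm
      rw [hc2, hc1, Nat.cast_sub hkn]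
      ring
    · rw [if_neg hkn] at hn
      exact absurd rfl hn
  · -- closed under X^(p-k)
    intro s hs n hn
    rw [PowerSeries.coeff_X_pow_mul'] at hn
    by_cases hkn : p - k ≤ n
    · rw [if_pos hkn] at hn
      obtain ⟨i, h1, h2⟩ := hs (n - (p - k)) hn
      have hA := key hp hpq hk (i - q)
      rw [sub_add_cancel] at hA
      have hle : mz p q k (i - q) ≤ mz p q k i + (p - k) := by
        split_ifs at hA <;> omega
      refine ⟨i - q, by omega, ?_⟩
      apply (ZMod.natCast_eq_natCast_iff' _ _ _).1
      have hpkcast : ((p - k : ℕ) : ZMod p) = -(k : ZMod p) := by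
        rw [Nat.cast_sub hk.le, ZMod.natCast_self]
        ring
      have hc2 : ((mz p q k (i - q) : ℕ) : ZMod p) = ((mz p q k i : ℕ) : ZMod p) - k := by
        have h := congrArg (Nat.cast : ℕ → ZMod p) hA
        push_cast at h
        split_ifs at h with hcc
        · rw [ZMod.natCast_self] at h
          linear_combination -h
        · linear_combination -h
      have hc1 : ((mz p q k i : ℕ) : ZMod p) = ((n - (p - k) : ℕ) : ZMod p) :=
        (ZMod.natCast_eq_natCast_iff' _ _ _).2 h2.symm
      rw [hc2, hc1, Nat.cast_sub hkn, hpkcast]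
      ring
    · rw [if_neg hkn] at hn
      exact absurd rfl hn
  · refine ⟨LinearEquiv.ofLinear
      (LinearMap.codRestrict (RS p q k) (fmap p q k) (fun x => fmap_mem hpq hpk x))
      ((gmap p q k).comp (RS p q k).subtype) ?_ ?_, ?_, ?_, ?_, mz p q k, rfl⟩
    · apply LinearMap.ext
      intro s
      apply Subtype.ext
      simp only [LinearMap.coe_comp, Function.comp_apply, LinearMap.codRestrict_apply,
        Submodule.coe_subtype, LinearMap.id_coe, id_eq]
      exact fmap_gmap hp hpq hpk s.2
    · apply LinearMap.ext
      intro x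
      simp only [LinearMap.coe_comp, Function.comp_apply, LinearMap.codRestrict_apply,
        Submodule.coe_subtype, LinearMap.id_coe, id_eq]
      exact gmap_fmap hp hpq hpk x
    · intro x
      have hx : φ x = fun j => (if (j : ZMod p).val < k then (PowerSeries.X :
          PowerSeries (ZMod 2)) else 1) * x (j - q) := funext (hφ x)
      simp only [LinearEquiv.ofLinear_apply, LinearMap.codRestrict_apply]
      rw [hx]
      exact fmap_phi hp hpq hk hpk x
    · intro x
      have hx : ψ x = fun j => (if ((j + q : ZMod p)).val < k then 1 else (PowerSeries.X :
          PowerSeries (ZMod 2))) * x (j + q) := funext (hψ x)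
      simp only [LinearEquiv.ofLinear_apply, LinearMap.codRestrict_apply]
      rw [hx]
      exact fmap_psi hp hpq hk hpk x
    · intro x
      have hps : φ (ψ x) = (PowerSeries.X : PowerSeries (ZMod 2)) • x := by
        funext j
        rw [hφ, hψ]
        have hjq : j - (q : ZMod p) + q = j := sub_add_cancel _ _
        rw [hjq]
        simp only [Pi.smul_apply, smul_eq_mul]
        split_ifs <;> ring
      simp only [LinearEquiv.ofLinear_apply, LinearMap.codRestrict_apply]
      rw [← hps, funext (hφ (ψ x)), fmap_phi hp hpq hk hpk, funext (hψ x),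
        fmap_psi hp hpq hk hpk, ← mul_assoc, ← pow_add]
      congr 2
      omega
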